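/- Let γ ∈ (0,1), ζ ∈ (0,1), δ ≥ 0, r ∈ ℝ, β > 0 with δ + (γ−1)r > 0; set a := (1−ζ^{1−γ})/γ. For the function u_0 given by the integral formula, one has lim_{m→∞} m/(γ u_0(m)) = 1/(1 − ζ^{1−γ}); equivalently u_0(m)/m → a as m → ∞. -/

import Mathlib

open Real MeasureTheory Set Filter

/-- The optimal consumption-wealth ratio with aging but no healthcare. -/
noncomputable def u0 (γ ζ δ r β : ℝ) (m : ℝ) : ℝ :=
  ((1 / β) * ∫ y in Ioi (0 : ℝ),
      Real.exp (-((1 - ζ ^ (1 - γ)) * m * y) / (β * γ)) *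
        (y + 1) ^ (-(1 + (δ + (γ - 1) * r) / (β * γ))))⁻¹

/-- Watson's-lemma-type asymptotic: `m · ∫_0^∞ e^{-kmy} (y+1)^{-p} dy → 1/k`. -/
lemma key_tendsto (k p : ℝ) (hk : 0 < k) (hp : 0 ≤ p) :
    Tendsto (fun m : ℝ => m * ∫ y in Ioi (0 : ℝ),
        Real.exp (-(k * m * y)) * (y + 1) ^ (-p)) atTop (nhds k⁻¹) := by
  have hmeas : ∀ b : ℝ, 0 < b → AEStronglyMeasurable
      (fun t : ℝ => Real.exp (-t) * (t / b + 1) ^ (-p))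
      (volume.restrict (Ioi (0 : ℝ))) := by
    intro b hb
    apply ContinuousOn.aestronglyMeasurable _ measurableSet_Ioi
    intro t ht
    apply ContinuousWithinAt.mul
    · exact (Real.continuous_exp.comp continuous_neg).continuousWithinAt
    · have hbase : ContinuousAt (fun t : ℝ => t / b + 1) t := by fun_prop
      have hpos : 0 < t / b + 1 := by
        have : 0 < t / b := div_pos ht hb
        linarith
      exact (hbase.rpow_const (Or.inl hpos.ne')).continuousWithinAt
  have hJ : Tendsto (fun m : ℝ => ∫ t in Ioi (0 : ℝ),
      Real.exp (-t) * (t / (k * m) + 1) ^ (-p)) atTop (nhds 1) := by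
    have h := MeasureTheory.tendsto_integral_filter_of_dominated_convergence
        (μ := volume.restrict (Ioi (0 : ℝ))) (l := atTop)
        (F := fun (m : ℝ) (t : ℝ) => Real.exp (-t) * (t / (k * m) + 1) ^ (-p))
        (f := fun t => Real.exp (-t)) (bound := fun t => Real.exp (-t))
        ?_ ?_ ?_ ?_
    · have h1 : ∫ t in Ioi (0 : ℝ), Real.exp (-t) = 1 := integral_exp_neg_Ioi_zero
      simpa only [h1] using h
    · filter_upwards [eventually_gt_atTop (0 : ℝ)] with m hm
      exact hmeas (k * m) (mul_pos hk hm)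
    · filter_upwards [eventually_gt_atTop (0 : ℝ)] with m hm
      filter_upwards [ae_restrict_mem measurableSet_Ioi] with t ht
      have hkm : 0 < k * m := mul_pos hk hm
      have hbase : (1 : ℝ) ≤ t / (k * m) + 1 := by
        have : 0 ≤ t / (k * m) := div_nonneg (le_of_lt ht) hkm.le
        linarith
      have h1 : (t / (k * m) + 1) ^ (-p) ≤ 1 :=
        Real.rpow_le_one_of_one_le_of_nonpos hbase (neg_nonpos.mpr hp)
      have h0 : 0 ≤ (t / (k * m) + 1) ^ (-p) :=
        Real.rpow_nonneg (by linarith) _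
      rw [norm_mul, Real.norm_eq_abs, Real.norm_eq_abs, abs_of_pos (Real.exp_pos _),
        abs_of_nonneg h0]
      nlinarith [Real.exp_pos (-t)]
    · exact (by simpa using exp_neg_integrableOn_Ioi (0 : ℝ) one_pos :
        IntegrableOn (fun x : ℝ => Real.exp (-x)) (Ioi 0) volume)
    · filter_upwards [ae_restrict_mem measurableSet_Ioi] with t _
      have h1 : Tendsto (fun m : ℝ => t / k * m⁻¹) atTop (nhds 0) := by
        simpa using tendsto_inv_atTop_zero.const_mul (t / k)
      have hbase : Tendsto (fun m : ℝ => t / (k * m) + 1) atTop (nhds 1) := by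
        have h2 : (fun m : ℝ => t / (k * m)) = fun m : ℝ => t / k * m⁻¹ := by
          funext m; rw [← div_div]; exact div_eq_mul_inv _ _
        have := (h2 ▸ h1).add_const 1
        simpa using this
      have hc : ContinuousAt (fun x : ℝ => x ^ (-p)) 1 :=
        Real.continuousAt_rpow_const 1 (-p) (Or.inl one_ne_zero)
      have := (hc.tendsto.comp hbase).const_mul (Real.exp (-t))
      simpa [Real.one_rpow] using this
  have heq : ∀ᶠ m : ℝ in atTop,
      m * (∫ y in Ioi (0 : ℝ), Real.exp (-(k * m * y)) * (y + 1) ^ (-p)) =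
      k⁻¹ * ∫ t in Ioi (0 : ℝ), Real.exp (-t) * (t / (k * m) + 1) ^ (-p) := by
    filter_upwards [eventually_gt_atTop (0 : ℝ)] with m hm
    have hkm : 0 < k * m := mul_pos hk hm
    have hcv := integral_comp_mul_left_Ioi
        (fun t => Real.exp (-t) * (t / (k * m) + 1) ^ (-p)) 0 hkm
    have hfun : (fun y => Real.exp (-(k * m * y)) * (y + 1) ^ (-p)) =
        fun y => Real.exp (-(k * m * y)) * ((k * m * y) / (k * m) + 1) ^ (-p) := by
      funext y
      rw [mul_div_cancel_left₀ _ hkm.ne']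
    rw [hfun]
    have h3 : (∫ y in Ioi (0 : ℝ),
        Real.exp (-(k * m * y)) * ((k * m * y) / (k * m) + 1) ^ (-p)) =
        (k * m)⁻¹ • ∫ t in Ioi (k * m * 0),
          Real.exp (-t) * (t / (k * m) + 1) ^ (-p) := hcv
    rw [h3, mul_zero, smul_eq_mul, ← mul_assoc, mul_inv, ← mul_assoc,
      mul_comm m k⁻¹, mul_assoc k⁻¹ m m⁻¹, mul_inv_cancel₀ hm.ne', mul_one]
  have hfin : Tendsto (fun m : ℝ => k⁻¹ * ∫ t in Ioi (0 : ℝ),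
      Real.exp (-t) * (t / (k * m) + 1) ^ (-p)) atTop (nhds (k⁻¹ * 1)) :=
    hJ.const_mul k⁻¹
  rw [mul_one] at hfin
  exact Tendsto.congr' (heq.mono fun m h => h.symm) hfin

theorem stmt_17 (γ ζ δ r β a : ℝ) (hγ : γ ∈ Ioo (0 : ℝ) 1) (hζ : ζ ∈ Ioo (0 : ℝ) 1)
    (hδ : 0 ≤ δ) (hβ : 0 < β) (hwell : 0 < δ + (γ - 1) * r)
    (ha : a = (1 - ζ ^ (1 - γ)) / γ) :
    Tendsto (fun m => m / (γ * u0 γ ζ δ r β m)) atTop (nhds (1 / (1 - ζ ^ (1 - γ)))) ∧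
    Tendsto (fun m => u0 γ ζ δ r β m / m) atTop (nhds a) := by
  have hγ0 := hγ.1
  have hγ1 := hγ.2
  have hc1 : ζ ^ (1 - γ) < 1 :=
    Real.rpow_lt_one hζ.1.le hζ.2 (by linarith)
  have hnum : 0 < 1 - ζ ^ (1 - γ) := by linarith
  have hβγ : 0 < β * γ := mul_pos hβ hγ0
  have hk : 0 < (1 - ζ ^ (1 - γ)) / (β * γ) := div_pos hnum hβγ
  have hp : 0 ≤ 1 + (δ + (γ - 1) * r) / (β * γ) := by
    have : 0 ≤ (δ + (γ - 1) * r) / (β * γ) := le_of_lt (div_pos hwell hβγ)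
    linarith
  have hI : ∀ m : ℝ, (∫ y in Ioi (0 : ℝ),
      Real.exp (-((1 - ζ ^ (1 - γ)) * m * y) / (β * γ)) *
        (y + 1) ^ (-(1 + (δ + (γ - 1) * r) / (β * γ)))) =
      ∫ y in Ioi (0 : ℝ),
        Real.exp (-((1 - ζ ^ (1 - γ)) / (β * γ) * m * y)) *
          (y + 1) ^ (-(1 + (δ + (γ - 1) * r) / (β * γ))) := by
    intro m
    congr 1
    funext y
    congr 2
    ring
  have hkey := key_tendsto ((1 - ζ ^ (1 - γ)) / (β * γ))
      (1 + (δ + (γ - 1) * r) / (β * γ)) hk hp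
  have hu0 : ∀ m : ℝ, u0 γ ζ δ r β m =
      ((1 / β) * ∫ y in Ioi (0 : ℝ),
        Real.exp (-((1 - ζ ^ (1 - γ)) / (β * γ) * m * y)) *
          (y + 1) ^ (-(1 + (δ + (γ - 1) * r) / (β * γ))))⁻¹ := by
    intro m
    rw [u0, hI m]
  have alg : ∀ X mm : ℝ, mm / (γ * ((1 / β) * X)⁻¹) = (β * γ)⁻¹ * (mm * X) := by
    intro X mm
    have h1 : (γ * ((1 / β) * X)⁻¹)⁻¹ = γ⁻¹ * ((1 / β) * X) := by
      rw [mul_inv, inv_inv]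
    rw [div_eq_mul_inv, h1, mul_inv]
    ring
  have h1lim : Tendsto (fun m => m / (γ * u0 γ ζ δ r β m)) atTop
      (nhds (1 / (1 - ζ ^ (1 - γ)))) := by
    have hlim := hkey.const_mul ((β * γ)⁻¹)
    have hval : (β * γ)⁻¹ * ((1 - ζ ^ (1 - γ)) / (β * γ))⁻¹ =
        1 / (1 - ζ ^ (1 - γ)) := by
      rw [inv_div]
      field_simp
    rw [hval] at hlim
    refine hlim.congr fun m => ?_
    rw [hu0 m, alg]
  refine ⟨h1lim, ?_⟩
  have hne : (1 : ℝ) / (1 - ζ ^ (1 - γ)) ≠ 0 := by positivity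
  have h2 := (h1lim.inv₀ hne).const_mul γ⁻¹
  have hval2 : γ⁻¹ * ((1 : ℝ) / (1 - ζ ^ (1 - γ)))⁻¹ = a := by
    rw [ha, one_div, inv_inv]
    ring
  rw [hval2] at h2
  refine h2.congr fun m => ?_
  rw [inv_div, mul_div_assoc', inv_mul_cancel_left₀ hγ0.ne']
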